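/- For every integer m ≥ 1, the generating function of the row sums r_n = Σ_{k=0}^{n} B_m(n,k) of the m-th triangle of the first family is 1/((1+x+⋯+x^{m−1})(1−2x)); that is, in the ring of formal power series over ℤ, (1 + X + ⋯ + X^{m−1})·(1 − 2X) · Σ_{n≥0} r_n X^n = 1. -/

import Mathlib

/-- The `m`-th Pascal-like triangle of the first family: `B m n 0 = 1`,
`B m n n = 1` if `m ∣ n` and `0` otherwise, and Pascal's recurrence
`B m n k = B m (n-1) k + B m (n-1) (k-1)` for `0 < k < n`.
(Values with `k > n` are set to `0`.) -/
def B (m : ℕ) : ℕ → ℕ → ℕ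
  | _, 0 => 1
  | 0, _ + 1 => 0
  | n + 1, k + 1 =>
      if n + 1 = k + 1 then (if m ∣ (n + 1) then 1 else 0)
      else if n + 1 < k + 1 then 0
      else B m n (k + 1) + B m n k

lemma B_zero (m n : ℕ) : B m n 0 = 1 := by cases n <;> rfl

lemma B_diag (m n : ℕ) : B m n n = if m ∣ n then 1 else 0 := by
  cases n with
  | zero => simp [B]
  | succ n => rw [B]; simp

lemma B_rec (m n k : ℕ) (h : k < n) :
    B m (n + 1) (k + 1) = B m n (k + 1) + B m n k := by
  rw [B]
  rw [if_neg (by omega), if_neg (by omega)]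

/-- Row sum recurrence over ℤ. -/
lemma rowsum_rec (m n : ℕ) :
    ((∑ k ∈ Finset.range (n + 2), B m (n + 1) k : ℕ) : ℤ) =
      2 * ((∑ k ∈ Finset.range (n + 1), B m n k : ℕ) : ℤ) +
      (if m ∣ (n + 1) then 1 else 0) - (if m ∣ n then 1 else 0) := by
  push_cast
  have h1 : (∑ k ∈ Finset.range (n + 2), (B m (n + 1) k : ℤ))
      = (∑ k ∈ Finset.range (n + 1), (B m (n + 1) (k + 1) : ℤ)) + (B m (n + 1) 0 : ℤ) :=
    Finset.sum_range_succ' _ _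
  have h2 : (∑ k ∈ Finset.range (n + 1), (B m (n + 1) (k + 1) : ℤ))
      = (∑ k ∈ Finset.range n, (B m (n + 1) (k + 1) : ℤ)) + (B m (n + 1) (n + 1) : ℤ) :=
    Finset.sum_range_succ _ _
  have h3 : (∑ k ∈ Finset.range n, (B m (n + 1) (k + 1) : ℤ))
      = ∑ k ∈ Finset.range n, ((B m n (k + 1) : ℤ) + (B m n k : ℤ)) := by
    apply Finset.sum_congr rfl
    intro k hk
    rw [B_rec m n k (Finset.mem_range.mp hk)]
    push_cast; ring
  have h4 : (∑ k ∈ Finset.range n, (B m n (k + 1) : ℤ))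
      = (∑ k ∈ Finset.range (n + 1), (B m n k : ℤ)) - (B m n 0 : ℤ) := by
    have := Finset.sum_range_succ' (fun k => (B m n k : ℤ)) n
    linarith
  have h5 : (∑ k ∈ Finset.range n, (B m n k : ℤ))
      = (∑ k ∈ Finset.range (n + 1), (B m n k : ℤ)) - (B m n n : ℤ) := by
    have := Finset.sum_range_succ (fun k => (B m n k : ℤ)) n
    linarith
  rw [h1, h2, h3, Finset.sum_add_distrib, h4, h5, B_diag m (n + 1), B_diag m n, B_zero, B_zero]
  split_ifs <;> push_cast <;> ring

/-- The generating function of the row sums of the `m`-th triangle of the first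
family is `1/((1 + x + ⋯ + x^(m-1))(1 - 2x))`. -/
theorem stmt_3 (m : ℕ) (hm : 1 ≤ m) :
    (∑ i ∈ Finset.range m, PowerSeries.X ^ i) * (1 - 2 * PowerSeries.X) *
      PowerSeries.mk (fun n => ((∑ k ∈ Finset.range (n + 1), B m n k : ℕ) : ℤ)) = 1 := by
  set R : PowerSeries ℤ :=
    PowerSeries.mk (fun n => ((∑ k ∈ Finset.range (n + 1), B m n k : ℕ) : ℤ)) with hR
  set D : PowerSeries ℤ :=
    PowerSeries.mk (fun n => if m ∣ n then (1 : ℤ) else 0) with hD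
  have key : (1 - 2 * PowerSeries.X) * R = (1 - PowerSeries.X) * D := by
    ext n
    rw [sub_mul, sub_mul, one_mul, one_mul, mul_assoc]
    simp only [map_sub, map_mul]
    cases n with
    | zero =>
      simp [hR, hD, PowerSeries.coeff_zero_eq_constantCoeff, B_zero]
    | succ n =>
      rw [PowerSeries.coeff_succ_X_mul]
      rw [show ((PowerSeries.coeff (n+1)) (2 * (PowerSeries.X * R))) =
        2 * (PowerSeries.coeff (n+1)) (PowerSeries.X * R) by
          rw [show (2 : PowerSeries ℤ) = PowerSeries.C 2 by simp, PowerSeries.coeff_C_mul]]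
      rw [PowerSeries.coeff_succ_X_mul]
      simp only [hR, hD, PowerSeries.coeff_mk]
      have := rowsum_rec m n
      linarith
  have geom : (∑ i ∈ Finset.range m, (PowerSeries.X : PowerSeries ℤ) ^ i) *
      (1 - PowerSeries.X) = 1 - PowerSeries.X ^ m := by
    have := geom_sum_mul (PowerSeries.X : PowerSeries ℤ) m
    have h2 : (∑ i ∈ Finset.range m, (PowerSeries.X : PowerSeries ℤ) ^ i) *
        (1 - PowerSeries.X) = -((∑ i ∈ Finset.range m, (PowerSeries.X : PowerSeries ℤ) ^ i) *
        (PowerSeries.X - 1)) := by ring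
    rw [h2, this]; ring
  have final : (1 - (PowerSeries.X : PowerSeries ℤ) ^ m) * D = 1 := by
    ext n
    rw [sub_mul, one_mul, map_sub]
    rw [PowerSeries.coeff_X_pow_mul']
    cases n with
    | zero =>
      rw [if_neg (by omega : ¬ m ≤ 0)]
      simp [hD]
    | succ n =>
      simp only [hD, PowerSeries.coeff_mk, PowerSeries.coeff_one, Nat.succ_ne_zero, if_false]
      by_cases hle : m ≤ n + 1
      · rw [if_pos hle]
        have hiff : m ∣ (n + 1) ↔ m ∣ (n + 1 - m) := by
          constructor
          · intro h; exact Nat.dvd_sub h dvd_rfl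
          · intro h
            have := Nat.dvd_add h (dvd_refl m)
            rwa [Nat.sub_add_cancel hle] at this
        simp only [hiff]
        split_ifs <;> ring
      · rw [if_neg hle, if_neg]
        · ring
        · intro h
          exact hle (Nat.le_of_dvd (Nat.succ_pos n) h)
  calc (∑ i ∈ Finset.range m, (PowerSeries.X : PowerSeries ℤ) ^ i) *
        (1 - 2 * PowerSeries.X) * R
      = (∑ i ∈ Finset.range m, (PowerSeries.X : PowerSeries ℤ) ^ i) *
        ((1 - 2 * PowerSeries.X) * R) := by ring
    _ = (∑ i ∈ Finset.range m, (PowerSeries.X : PowerSeries ℤ) ^ i) *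
        ((1 - PowerSeries.X) * D) := by rw [key]
    _ = ((∑ i ∈ Finset.range m, (PowerSeries.X : PowerSeries ℤ) ^ i) *
        (1 - PowerSeries.X)) * D := by ring
    _ = (1 - PowerSeries.X ^ m) * D := by rw [geom]
    _ = 1 := final
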